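/- Let f : ℍ → ℂ be holomorphic and define F : ℝ × ℝ_{>0} × ℝ → ℂ by F(x,y,t) := f(x+iy)·y^{m/2}·e^{−imt}. Then for every k ∈ ℤ≥0 and all x ∈ ℝ, y ∈ ℝ_{>0}, t ∈ ℝ: ((n⁺)^k F)(x,y,t) = e^{−i(m+2k)t}·y^{m/2}·Σ_{l=0}^{k} C(k,l)·(2iy)^l·(∏_{r=l+1}^{k}(m−1+r))·f^{(l)}(x+iy), where C(k,l) is the binomial coefficient, the empty product (for l = k) equals 1, and f^{(l)} is the l-th complex derivative of f. -/

import Mathlib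

open Complex MeasureTheory Filter Topology
open scoped Real

set_option autoImplicit false

noncomputable section

/-- The upper half-plane, as a subset of `ℂ`. -/
def UH : Set ℂ := {z : ℂ | 0 < z.im}

/-- The first-order differential operator `n⁺` acting on functions
`φ : ℝ × ℝ_{>0} × ℝ → ℂ` (in coordinates `(x, y, t)`):
`(n⁺φ)(x,y,t) = i·y·e^{-2it}·(∂φ/∂x − i·∂φ/∂y) + (i/2)·e^{-2it}·∂φ/∂t`. -/
def nplus (φ : ℝ → ℝ → ℝ → ℂ) : ℝ → ℝ → ℝ → ℂ := fun x y t =>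
  I * (y : ℂ) * Complex.exp (-2 * I * (t : ℂ)) *
      (deriv (fun x' => φ x' y t) x - I * deriv (fun y' => φ x y' t) y) +
    (I / 2) * Complex.exp (-2 * I * (t : ℂ)) * deriv (fun t' => φ x y t') t

/-- coefficient `C(k,l) * ∏_{r=l+1}^k (m-1+r)` -/
def ccoef (m : ℂ) (k l : ℕ) : ℂ :=
  (k.choose l : ℂ) * ∏ r ∈ Finset.Icc (l + 1) k, (m - 1 + (r : ℂ))

lemma ccoef_top (m : ℂ) (k : ℕ) : ccoef m k (k + 1) = 0 := by
  simp [ccoef, Nat.choose_succ_self]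

lemma ccoef_zero_succ (m : ℂ) (k : ℕ) : ccoef m (k + 1) 0 = (m + k) * ccoef m k 0 := by
  unfold ccoef
  rw [Finset.prod_Icc_succ_top (by omega)]
  simp only [Nat.choose_zero_right, Nat.cast_one]
  push_cast
  ring

lemma ccoef_succ_succ (m : ℂ) (k l : ℕ) (hl : l ≤ k) :
    ccoef m (k + 1) (l + 1) = (m + k + l + 1) * ccoef m k (l + 1) + ccoef m k l := by
  rcases eq_or_lt_of_le hl with heq | hlk
  · subst heq
    rw [ccoef, ccoef, ccoef, Finset.Icc_eq_empty (by omega), Finset.Icc_eq_empty (by omega),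
      Finset.Icc_eq_empty (by omega)]
    simp [Nat.choose_succ_self]
  · unfold ccoef
    have h1 : Finset.Icc (l + 1 + 1) (k + 1) ≠ ∅ := by
      rw [← Finset.nonempty_iff_ne_empty]; exact ⟨l + 2, by simp; omega⟩
    rw [Finset.prod_Icc_succ_top (by omega)]
    have hins : Finset.Icc (l + 1) k = insert (l + 1) (Finset.Icc (l + 2) k) := by
      ext a; simp [Finset.mem_Icc]; omega
    rw [hins, Finset.prod_insert (by simp)]
    have hch : ((k.choose (l + 1) : ℂ)) * ((l : ℂ) + 1) = (k.choose l : ℂ) * ((k : ℂ) - (l : ℂ)) := by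
      rw [← Nat.cast_sub hl]
      exact_mod_cast Nat.choose_succ_right_eq k l
    rw [Nat.choose_succ_succ k l]
    push_cast
    set P := ∏ r ∈ Finset.Icc (l + 2) k, (m - 1 + (r : ℂ)) with hP
    linear_combination (-P) * hch

lemma sum_key (m : ℂ) (k : ℕ) (X : ℕ → ℂ) :
    ∑ l ∈ Finset.range (k + 1), ccoef m k l * ((m + k + l) * X l + X (l + 1))
      = ∑ l ∈ Finset.range (k + 2), ccoef m (k + 1) l * X l := by
  rw [Finset.sum_range_succ' (fun l => ccoef m (k + 1) l * X l) (k + 1)]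
  have hrw : ∀ l ∈ Finset.range (k + 1),
      ccoef m (k + 1) (l + 1) * X (l + 1)
        = (m + k + l + 1) * (ccoef m k (l + 1) * X (l + 1)) + ccoef m k l * X (l + 1) := by
    intro l hl
    rw [ccoef_succ_succ m k l (Nat.lt_succ_iff.mp (Finset.mem_range.mp hl))]
    ring
  rw [Finset.sum_congr rfl hrw, Finset.sum_add_distrib, ccoef_zero_succ]
  have hA : ∑ l ∈ Finset.range (k + 1), ccoef m k l * ((m + k + l) * X l + X (l + 1))
      = ∑ l ∈ Finset.range (k + 1), ccoef m k l * ((m + k + l) * X l)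
        + ∑ l ∈ Finset.range (k + 1), ccoef m k l * X (l + 1) := by
    rw [← Finset.sum_add_distrib]; exact Finset.sum_congr rfl fun l _ => by ring
  rw [hA]
  have hB : ∑ l ∈ Finset.range (k + 1), ccoef m k l * ((m + k + l) * X l)
      = ∑ l ∈ Finset.range (k + 1), (m + k + l + 1) * (ccoef m k (l + 1) * X (l + 1))
        + (m + k) * ccoef m k 0 * X 0 := by
    rw [Finset.sum_range_succ' (fun l => ccoef m k l * ((m + k + l) * X l)) k,
      Finset.sum_range_succ (fun l => (m + k + l + 1) * (ccoef m k (l + 1) * X (l + 1))) k,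
      ccoef_top]
    have hE : ∑ i ∈ Finset.range k, ccoef m k (i + 1) * ((m + (k : ℂ) + ((i + 1 : ℕ) : ℂ)) * X (i + 1))
        = ∑ i ∈ Finset.range k, (m + (k : ℂ) + (i : ℂ) + 1) * (ccoef m k (i + 1) * X (i + 1)) :=
      Finset.sum_congr rfl fun i _ => by push_cast; ring
    rw [hE]
    push_cast
    ring
  rw [hB]
  ring

lemma isOpen_UH : IsOpen UH := isOpen_lt continuous_const Complex.continuous_im

lemma analyticAt_iteratedDeriv {f : ℂ → ℂ} (hf : DifferentiableOn ℂ f UH) (l : ℕ) {z : ℂ}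
    (hz : 0 < z.im) : AnalyticAt ℂ (iteratedDeriv l f) z := by
  have h1 : AnalyticOnNhd ℂ f UH := (analyticOnNhd_iff_differentiableOn isOpen_UH).2 hf
  rw [iteratedDeriv_eq_iterate]
  exact h1.iterated_deriv l z hz

/-- the claimed value of `(n⁺)^k F`. -/
def Gg (m : ℝ) (f : ℂ → ℂ) (k : ℕ) : ℝ → ℝ → ℝ → ℂ := fun x y t =>
  Complex.exp (-I * ((m : ℂ) + 2 * (k : ℂ)) * (t : ℂ)) * ((y ^ (m / 2) : ℝ) : ℂ) *
    ∑ l ∈ Finset.range (k + 1), (k.choose l : ℂ) * (2 * I * (y : ℂ)) ^ l *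
      (∏ r ∈ Finset.Icc (l + 1) k, ((m : ℂ) - 1 + (r : ℂ))) *
      iteratedDeriv l f ((x : ℂ) + (y : ℂ) * I)

lemma hasDerivAt_iter_x {f : ℂ → ℂ} (hf : DifferentiableOn ℂ f UH) (l : ℕ) (x y : ℝ)
    (hy : 0 < y) :
    HasDerivAt (fun x' : ℝ => iteratedDeriv l f ((x' : ℂ) + (y : ℂ) * I))
      (iteratedDeriv (l + 1) f ((x : ℂ) + (y : ℂ) * I)) x := by
  have hz : (0 : ℝ) < ((x : ℂ) + (y : ℂ) * I).im := by simp [hy]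
  have hD : HasDerivAt (iteratedDeriv l f) (iteratedDeriv (l + 1) f ((x : ℂ) + (y : ℂ) * I))
      ((x : ℂ) + (y : ℂ) * I) := by
    rw [iteratedDeriv_succ]
    exact ((analyticAt_iteratedDeriv hf l hz).differentiableAt).hasDerivAt
  have h1 : HasDerivAt (fun w : ℂ => iteratedDeriv l f (w + (y : ℂ) * I))
      (iteratedDeriv (l + 1) f ((x : ℂ) + (y : ℂ) * I)) (x : ℂ) := by
    simpa [Function.comp_def] using hD.comp (x : ℂ) ((hasDerivAt_id ((x : ℂ))).add_const ((y : ℂ) * I))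
  exact h1.comp_ofReal

lemma hasDerivAt_iter_y {f : ℂ → ℂ} (hf : DifferentiableOn ℂ f UH) (l : ℕ) (x y : ℝ)
    (hy : 0 < y) :
    HasDerivAt (fun y' : ℝ => iteratedDeriv l f ((x : ℂ) + (y' : ℂ) * I))
      (iteratedDeriv (l + 1) f ((x : ℂ) + (y : ℂ) * I) * I) y := by
  have hz : (0 : ℝ) < ((x : ℂ) + (y : ℂ) * I).im := by simp [hy]
  have hD : HasDerivAt (iteratedDeriv l f) (iteratedDeriv (l + 1) f ((x : ℂ) + (y : ℂ) * I))
      ((x : ℂ) + (y : ℂ) * I) := by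
    rw [iteratedDeriv_succ]
    exact ((analyticAt_iteratedDeriv hf l hz).differentiableAt).hasDerivAt
  have h1 : HasDerivAt (fun w : ℂ => iteratedDeriv l f ((x : ℂ) + w * I))
      (iteratedDeriv (l + 1) f ((x : ℂ) + (y : ℂ) * I) * I) (y : ℂ) := by
    simpa [Function.comp_def] using hD.comp (y : ℂ) (((hasDerivAt_id ((y : ℂ))).mul_const I).const_add (x : ℂ))
  exact h1.comp_ofReal

lemma hasDerivAt_pow2Iy (l : ℕ) (y : ℝ) :
    HasDerivAt (fun y' : ℝ => (2 * I * (y' : ℂ)) ^ l)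
      ((l : ℂ) * (2 * I * (y : ℂ)) ^ (l - 1) * (2 * I)) y := by
  have h1 : HasDerivAt (fun w : ℂ => (2 * I * w) ^ l)
      ((l : ℂ) * (2 * I * (y : ℂ)) ^ (l - 1) * (2 * I)) (y : ℂ) := by
    have h0 : HasDerivAt (fun w : ℂ => 2 * I * w) (2 * I) (y : ℂ) := by
      simpa using (hasDerivAt_id ((y : ℂ))).const_mul ((2 : ℂ) * I)
    simpa [Function.comp_def, mul_assoc] using (hasDerivAt_pow l (2 * I * (y : ℂ))).comp (y : ℂ) h0
  exact h1.comp_ofReal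

lemma hasDerivAt_expt (c : ℂ) (t : ℝ) :
    HasDerivAt (fun t' : ℝ => Complex.exp (c * (t' : ℂ))) (c * Complex.exp (c * (t : ℂ))) t := by
  have h : HasDerivAt (fun w : ℂ => Complex.exp (c * w)) (c * Complex.exp (c * (t : ℂ))) (t : ℂ) := by
    have h0 : HasDerivAt (fun w : ℂ => c * w) c (t : ℂ) := by
      simpa using (hasDerivAt_id ((t : ℂ))).const_mul c
    simpa [mul_comm] using h0.cexp
  exact h.comp_ofReal

lemma hq_fact (y : ℝ) (l : ℕ) :
    (l : ℂ) * (2 * I * (y : ℂ)) ^ (l - 1) * (2 * I) * (y : ℂ)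
      = (l : ℂ) * (2 * I * (y : ℂ)) ^ l := by
  cases l with
  | zero => simp
  | succ n => rw [Nat.add_sub_cancel, pow_succ]; push_cast; ring

lemma step (m : ℝ) (f : ℂ → ℂ) (hf : DifferentiableOn ℂ f UH) (k : ℕ) (x y t : ℝ)
    (hy : 0 < y) : nplus (Gg m f k) x y t = Gg m f (k + 1) x y t := by
  have hyne : ((y : ℂ)) ≠ 0 := Complex.ofReal_ne_zero.mpr hy.ne'
  set z := (x : ℂ) + (y : ℂ) * I with hz
  set E := Complex.exp (-I * ((m : ℂ) + 2 * (k : ℂ)) * (t : ℂ)) with hE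
  set Y := ((y ^ (m / 2) : ℝ) : ℂ) with hYdef
  set Y' := (((m / 2) * y ^ (m / 2 - 1) : ℝ) : ℂ) with hY'def
  set e2 := Complex.exp (-2 * I * (t : ℂ)) with he2
  set P : ℕ → ℂ := fun l => ∏ r ∈ Finset.Icc (l + 1) k, ((m : ℂ) - 1 + (r : ℂ)) with hP
  set F : ℕ → ℂ := fun l => iteratedDeriv l f z with hF
  -- the x-derivative
  have hsx : HasDerivAt
      (fun x' : ℝ => ∑ l ∈ Finset.range (k + 1), (k.choose l : ℂ) * (2 * I * (y : ℂ)) ^ l *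
        P l * iteratedDeriv l f ((x' : ℂ) + (y : ℂ) * I))
      (∑ l ∈ Finset.range (k + 1), (k.choose l : ℂ) * (2 * I * (y : ℂ)) ^ l *
        P l * F (l + 1)) x :=
    HasDerivAt.fun_sum fun l _ =>
      ((hasDerivAt_iter_x hf l x y hy).const_mul ((k.choose l : ℂ) * (2 * I * (y : ℂ)) ^ l * P l))
  have hdx : deriv (fun x' : ℝ => Gg m f k x' y t) x
      = (E * Y) * ∑ l ∈ Finset.range (k + 1), (k.choose l : ℂ) * (2 * I * (y : ℂ)) ^ l *
        P l * F (l + 1) := by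
    have h2 := hsx.const_mul (E * Y)
    exact h2.deriv
  -- the t-derivative
  have hst := ((hasDerivAt_expt (-I * ((m : ℂ) + 2 * (k : ℂ))) t).mul_const Y).mul_const
      (∑ l ∈ Finset.range (k + 1), (k.choose l : ℂ) * (2 * I * (y : ℂ)) ^ l * P l * F l)
  have hdt : deriv (fun t' : ℝ => Gg m f k x y t') t
      = -I * ((m : ℂ) + 2 * (k : ℂ)) * E * Y *
        ∑ l ∈ Finset.range (k + 1), (k.choose l : ℂ) * (2 * I * (y : ℂ)) ^ l * P l * F l := by
    exact hst.deriv
  -- the y-derivative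
  have hY0 : HasDerivAt (fun y' : ℝ => ((y' ^ (m / 2) : ℝ) : ℂ)) Y' y :=
    (Real.hasDerivAt_rpow_const (Or.inl hy.ne')).ofReal_comp
  have hsy : HasDerivAt
      (fun y' : ℝ => ∑ l ∈ Finset.range (k + 1), E * ((y' ^ (m / 2) : ℝ) : ℂ) *
        ((k.choose l : ℂ) * (2 * I * (y' : ℂ)) ^ l * P l *
          iteratedDeriv l f ((x : ℂ) + (y' : ℂ) * I)))
      (∑ l ∈ Finset.range (k + 1),
        ((E * Y') * ((k.choose l : ℂ) * (2 * I * (y : ℂ)) ^ l * P l * F l)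
          + (E * Y) * ((k.choose l : ℂ) * ((l : ℂ) * (2 * I * (y : ℂ)) ^ (l - 1) * (2 * I)) * P l * F l
              + (k.choose l : ℂ) * (2 * I * (y : ℂ)) ^ l * P l * (F (l + 1) * I)))) y := by
    refine HasDerivAt.fun_sum fun l _ => ?_
    exact (hY0.const_mul E).mul
      ((((hasDerivAt_pow2Iy l y).const_mul ((k.choose l : ℂ))).mul_const (P l)).mul
        (hasDerivAt_iter_y hf l x y hy))
  have hdy : deriv (fun y' : ℝ => Gg m f k x y' t) y
      = ∑ l ∈ Finset.range (k + 1),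
        ((E * Y') * ((k.choose l : ℂ) * (2 * I * (y : ℂ)) ^ l * P l * F l)
          + (E * Y) * ((k.choose l : ℂ) * ((l : ℂ) * (2 * I * (y : ℂ)) ^ (l - 1) * (2 * I)) * P l * F l
              + (k.choose l : ℂ) * (2 * I * (y : ℂ)) ^ l * P l * (F (l + 1) * I))) := by
    have hfe : (fun y' : ℝ => Gg m f k x y' t)
        = fun y' : ℝ => ∑ l ∈ Finset.range (k + 1), E * ((y' ^ (m / 2) : ℝ) : ℂ) *
          ((k.choose l : ℂ) * (2 * I * (y' : ℂ)) ^ l * P l *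
            iteratedDeriv l f ((x : ℂ) + (y' : ℂ) * I)) := by
      funext y'
      simp only [Gg, Finset.mul_sum, hP, hE]
    rw [hfe]
    exact hsy.deriv
  -- real-power fact
  have hr' : y * (m / 2 * y ^ (m / 2 - 1)) = m / 2 * y ^ (m / 2) := by
    rw [Real.rpow_sub_one hy.ne']
    field_simp
  have hYY : ((y : ℝ) : ℂ) * Y' = ((m : ℂ) / 2) * Y := by
    rw [hY'def, hYdef, ← Complex.ofReal_mul]
    have := congrArg (fun r : ℝ => (r : ℂ)) hr'
    push_cast at this ⊢
    linear_combination this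
  -- assemble
  simp only [nplus]
  rw [hdx, hdy, hdt]
  have hIA : ∀ A B : ℂ, I * (y : ℂ) * e2 * (A - I * B)
      = I * (y : ℂ) * e2 * A + (y : ℂ) * e2 * B := fun A B => by
    linear_combination (-((y : ℂ) * e2 * B)) * Complex.I_mul_I
  have hIB : ∀ C : ℂ, (I / 2) * e2 * (-I * ((m : ℂ) + 2 * (k : ℂ)) * E * Y * C)
      = ((m : ℂ) / 2 + (k : ℂ)) * e2 * E * Y * C := fun C => by
    linear_combination (-(((m : ℂ) / 2 + (k : ℂ)) * e2 * E * Y * C)) * Complex.I_mul_I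
  rw [hIA, hIB]
  -- rewrite the target
  have hexp : Complex.exp (-I * ((m : ℂ) + 2 * (((k : ℕ) + 1 : ℕ) : ℂ)) * (t : ℂ)) = e2 * E := by
    rw [he2, hE, ← Complex.exp_add]
    congr 1
    push_cast
    ring
  have hGg1 : Gg m f (k + 1) x y t
      = e2 * E * Y * ∑ l ∈ Finset.range (k + 1 + 1), ccoef (m : ℂ) (k + 1) l *
          ((2 * I * (y : ℂ)) ^ l * F l) := by
    simp only [Gg]
    rw [hexp]
    congr 1
    exact Finset.sum_congr rfl fun l _ => by rw [ccoef]; simp only [hF, hz]; ring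
  rw [hGg1, ← sum_key (m : ℂ) k (fun l => (2 * I * (y : ℂ)) ^ l * F l)]
  have hPl : ∀ l, ccoef (m : ℂ) k l = (k.choose l : ℂ) * P l := fun l => by
    rw [ccoef, hP]
  simp only [hPl, Finset.mul_sum]
  rw [← Finset.sum_add_distrib, ← Finset.sum_add_distrib]
  refine Finset.sum_congr rfl fun l hl => ?_
  simp only [pow_succ]
  linear_combination (e2 * E * (k.choose l : ℂ) * (2 * I * (y : ℂ)) ^ l * (P l) * (F l)) * hYY
    + (e2 * E * Y * (k.choose l : ℂ) * (P l) * (F l)) * hq_fact y l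


theorem stmt19 (m : ℝ) (j : ℕ) (hm : m = 3 / 2 + j)
    (f : ℂ → ℂ) (hf : DifferentiableOn ℂ f UH)
    (k : ℕ) (x : ℝ) (y : ℝ) (hy : 0 < y) (t : ℝ) :
    (nplus^[k] fun x' y' t' =>
        f ((x' : ℂ) + (y' : ℂ) * I) * ((y' ^ (m / 2) : ℝ) : ℂ) *
          Complex.exp (-I * (m : ℂ) * (t' : ℂ))) x y t =
      Complex.exp (-I * ((m : ℂ) + 2 * (k : ℂ)) * (t : ℂ)) * ((y ^ (m / 2) : ℝ) : ℂ) *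
        ∑ l ∈ Finset.range (k + 1), (k.choose l : ℂ) * (2 * I * (y : ℂ)) ^ l *
          (∏ r ∈ Finset.Icc (l + 1) k, ((m : ℂ) - 1 + (r : ℂ))) *
          iteratedDeriv l f ((x : ℂ) + (y : ℂ) * I) := by
  have main : ∀ (k : ℕ) (x y t : ℝ), 0 < y →
      (nplus^[k] fun x' y' t' =>
        f ((x' : ℂ) + (y' : ℂ) * I) * ((y' ^ (m / 2) : ℝ) : ℂ) *
          Complex.exp (-I * (m : ℂ) * (t' : ℂ))) x y t = Gg m f k x y t := by
    intro k
    induction k with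
    | zero =>
      intro x y t hy
      simp only [Function.iterate_zero, id_eq, Gg]
      norm_num [Finset.sum_range_one, iteratedDeriv_zero,
        Finset.Icc_eq_empty (by norm_num : ¬(1 : ℕ) ≤ 0)]
      ring
    | succ n ih =>
      intro x y t hy
      rw [Function.iterate_succ_apply']
      have e1 : deriv (fun x' : ℝ => (nplus^[n] fun x' y' t' =>
          f ((x' : ℂ) + (y' : ℂ) * I) * ((y' ^ (m / 2) : ℝ) : ℂ) *
            Complex.exp (-I * (m : ℂ) * (t' : ℂ))) x' y t) x
          = deriv (fun x' : ℝ => Gg m f n x' y t) x := by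
        congr 1
        funext x'
        exact ih x' y t hy
      have e2 : deriv (fun y' : ℝ => (nplus^[n] fun x' y' t' =>
          f ((x' : ℂ) + (y' : ℂ) * I) * ((y' ^ (m / 2) : ℝ) : ℂ) *
            Complex.exp (-I * (m : ℂ) * (t' : ℂ))) x y' t) y
          = deriv (fun y' : ℝ => Gg m f n x y' t) y := by
        apply Filter.EventuallyEq.deriv_eq
        filter_upwards [Ioi_mem_nhds hy] with y' hy'
        exact ih x y' t hy'
      have e3 : deriv (fun t' : ℝ => (nplus^[n] fun x' y' t' =>
          f ((x' : ℂ) + (y' : ℂ) * I) * ((y' ^ (m / 2) : ℝ) : ℂ) *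
            Complex.exp (-I * (m : ℂ) * (t' : ℂ))) x y t') t
          = deriv (fun t' : ℝ => Gg m f n x y t') t := by
        congr 1
        funext t'
        exact ih x y t' hy
      calc (nplus (nplus^[n] fun x' y' t' =>
          f ((x' : ℂ) + (y' : ℂ) * I) * ((y' ^ (m / 2) : ℝ) : ℂ) *
            Complex.exp (-I * (m : ℂ) * (t' : ℂ)))) x y t
          = nplus (Gg m f n) x y t := by
            simp only [nplus]
            rw [e1, e2, e3]
        _ = Gg m f (n + 1) x y t := step m f hf n x y t hy
  rw [main k x y t hy, Gg]
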